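/- Let m, n ≥ 1, T = {0,1}, L = {H^2_0, V^2_1}. Then the number of L-dappled tilings of G_{m,n} is at least 2^{⌈m/2⌉⌈n/2⌉}, and this bound is witnessed by draughtboard tilings which are pairwise distinct whenever their values on the cells {(2k,2l)} differ. -/
import Mathlib


/-- `L`-dappled for `L = {H²₀, V²₁}`: no three horizontally consecutive `0`'s
and no three vertically consecutive `1`'s. -/
def Dap (m n : ℕ) (f : ℕ → ℕ → Fin 2) : Prop :=
  ∀ i < m, ∀ j < n,
    ¬(2 ≤ i ∧ f i j = 0 ∧ f (i-1) j = 0 ∧ f (i-2) j = 0) ∧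
    ¬(2 ≤ j ∧ f i j = 1 ∧ f i (j-1) = 1 ∧ f i (j-2) = 1)

/-- The draughtboard tiling determined by `c`. -/
def db0 (c : ℕ → ℕ → Fin 2) (i j : ℕ) : Fin 2 :=
  if i % 2 = j % 2 then c (i/2) (j/2) else 1 - c (i/2) (j/2)

lemma fin2_sub_ne (a : Fin 2) : a ≠ 1 - a := by fin_cases a <;> decide

lemma db0_ee (c : ℕ → ℕ → Fin 2) (k l : ℕ) : db0 c (2*k) (2*l) = c k l := by
  have h1 : (2*k) % 2 = 0 := by omega
  have h2 : (2*l) % 2 = 0 := by omega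
  have h3 : (2*k) / 2 = k := by omega
  have h4 : (2*l) / 2 = l := by omega
  simp [db0, h1, h2, h3, h4]

lemma db0_oo (c : ℕ → ℕ → Fin 2) (k l : ℕ) : db0 c (2*k+1) (2*l+1) = c k l := by
  have h1 : (2*k+1) % 2 = 1 := by omega
  have h2 : (2*l+1) % 2 = 1 := by omega
  have h3 : (2*k+1) / 2 = k := by omega
  have h4 : (2*l+1) / 2 = l := by omega
  simp [db0, h1, h2, h3, h4]

lemma db0_oe (c : ℕ → ℕ → Fin 2) (k l : ℕ) : db0 c (2*k+1) (2*l) = 1 - c k l := by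
  have h1 : (2*k+1) % 2 = 1 := by omega
  have h2 : (2*l) % 2 = 0 := by omega
  have h3 : (2*k+1) / 2 = k := by omega
  have h4 : (2*l) / 2 = l := by omega
  simp [db0, h1, h2, h3, h4]

lemma db0_eo (c : ℕ → ℕ → Fin 2) (k l : ℕ) : db0 c (2*k) (2*l+1) = 1 - c k l := by
  have h1 : (2*k) % 2 = 0 := by omega
  have h2 : (2*l+1) % 2 = 1 := by omega
  have h3 : (2*k) / 2 = k := by omega
  have h4 : (2*l+1) / 2 = l := by omega
  simp [db0, h1, h2, h3, h4]

lemma db0_col_ne (c : ℕ → ℕ → Fin 2) (t j : ℕ) : db0 c (2*t) j ≠ db0 c (2*t+1) j := by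
  rcases Nat.even_or_odd j with ⟨l, hl⟩ | ⟨l, hl⟩
  · rw [show j = 2*l by omega, db0_ee, db0_oe]; exact fin2_sub_ne _
  · rw [show j = 2*l+1 by omega, db0_eo, db0_oo]
    exact fun h => fin2_sub_ne _ h.symm

lemma db0_row_ne (c : ℕ → ℕ → Fin 2) (i t : ℕ) : db0 c i (2*t) ≠ db0 c i (2*t+1) := by
  rcases Nat.even_or_odd i with ⟨k, hk⟩ | ⟨k, hk⟩
  · rw [show i = 2*k by omega, db0_ee, db0_eo]; exact fin2_sub_ne _
  · rw [show i = 2*k+1 by omega, db0_oe, db0_oo]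
    exact fun h => fin2_sub_ne _ h.symm

lemma db0_col3 (c : ℕ → ℕ → Fin 2) (i j : ℕ) (hi : 2 ≤ i) :
    ¬(db0 c i j = db0 c (i-1) j ∧ db0 c (i-1) j = db0 c (i-2) j) := by
  rintro ⟨h1, h2⟩
  rcases Nat.even_or_odd i with ⟨k, hk⟩ | ⟨k, hk⟩
  · have e1 : i - 2 = 2*(k-1) := by omega
    have e2 : i - 1 = 2*(k-1)+1 := by omega
    rw [e1] at h2; rw [e2] at h2
    exact db0_col_ne c (k-1) j h2.symm
  · have e1 : i - 1 = 2*k := by omega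
    have e2 : i = 2*k+1 := by omega
    rw [e1, e2] at h1
    exact db0_col_ne c k j h1.symm

lemma db0_row3 (c : ℕ → ℕ → Fin 2) (i j : ℕ) (hj : 2 ≤ j) :
    ¬(db0 c i j = db0 c i (j-1) ∧ db0 c i (j-1) = db0 c i (j-2)) := by
  rintro ⟨h1, h2⟩
  rcases Nat.even_or_odd j with ⟨l, hl⟩ | ⟨l, hl⟩
  · have e1 : j - 2 = 2*(l-1) := by omega
    have e2 : j - 1 = 2*(l-1)+1 := by omega
    rw [e1] at h2; rw [e2] at h2
    exact db0_row_ne c i (l-1) h2.symm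
  · have e1 : j - 1 = 2*l := by omega
    have e2 : j = 2*l+1 := by omega
    rw [e1, e2] at h1
    exact db0_row_ne c i l h1.symm

lemma dap_db0 (m n : ℕ) (c : ℕ → ℕ → Fin 2) : Dap m n (db0 c) := by
  intro i _ j _
  constructor
  · rintro ⟨hi, a0, a1, a2⟩
    exact db0_col3 c i j hi ⟨a0.trans a1.symm, a1.trans a2.symm⟩
  · rintro ⟨hj, a0, a1, a2⟩
    exact db0_row3 c i j hj ⟨a0.trans a1.symm, a1.trans a2.symm⟩

lemma dap_congr {m n : ℕ} {f g : ℕ → ℕ → Fin 2}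
    (h : ∀ i < m, ∀ j < n, f i j = g i j) (hf : Dap m n f) : Dap m n g := by
  intro i hi j hj
  obtain ⟨h1, h2⟩ := hf i hi j hj
  constructor
  · rintro ⟨a, b, c', d⟩
    exact h1 ⟨a, by rw [h i hi j hj]; exact b,
      by rw [h (i-1) (by omega) j hj]; exact c',
      by rw [h (i-2) (by omega) j hj]; exact d⟩
  · rintro ⟨a, b, c', d⟩
    exact h2 ⟨a, by rw [h i hi j hj]; exact b,
      by rw [h i hi (j-1) (by omega)]; exact c',
      by rw [h i hi (j-2) (by omega)]; exact d⟩

/-- There are at least `2^{⌈m/2⌉⌈n/2⌉}` `L`-dappled tilings of `G_{m,n}` for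
`L = {H²₀, V²₁}`, witnessed by draughtboard tilings which are pairwise distinct
whenever their values on the cells `(2k,2l)` differ. -/
theorem stmt19 (m n : ℕ) (hm : 1 ≤ m) (hn : 1 ≤ n) :
    2 ^ (((m + 1) / 2) * ((n + 1) / 2)) ≤
      Nat.card {f : Fin m → Fin n → Fin 2 //
        Dap m n (fun i j => f ⟨i % m, Nat.mod_lt i hm⟩ ⟨j % n, Nat.mod_lt j hn⟩)} ∧
    ∃ db : (ℕ → ℕ → Fin 2) → (ℕ → ℕ → Fin 2),
      (∀ c, Dap m n (db c)) ∧
      (∀ c k l, 2*k < m → 2*l < n → db c (2*k) (2*l) = c k l) ∧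
      (∀ c k l, 2*k+1 < m → 2*l+1 < n → db c (2*k+1) (2*l+1) = c k l) ∧
      (∀ c k l, 2*k+1 < m → 2*l < n → db c (2*k+1) (2*l) = 1 - c k l) ∧
      (∀ c k l, 2*k < m → 2*l+1 < n → db c (2*k) (2*l+1) = 1 - c k l) ∧
      (∀ c c', db c = db c' → ∀ k l, 2*k < m → 2*l < n → c k l = c' k l) := by
  set a := (m + 1) / 2 with ha
  set b := (n + 1) / 2 with hb
  constructor
  · -- cardinality bound
    set S := {f : Fin m → Fin n → Fin 2 //
        Dap m n (fun i j => f ⟨i % m, Nat.mod_lt i hm⟩ ⟨j % n, Nat.mod_lt j hn⟩)}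
    have key : ∀ c : Fin a → Fin b → Fin 2, ∃ s : S,
        ∀ (k : Fin a) (l : Fin b), s.1 ⟨2*k.1, by omega⟩ ⟨2*l.1, by omega⟩ = c k l := by
      intro c
      set c' : ℕ → ℕ → Fin 2 := fun k l =>
        if h : k < a ∧ l < b then c ⟨k, h.1⟩ ⟨l, h.2⟩ else 0 with hc'
      refine ⟨⟨fun i j => db0 c' i.1 j.1, ?_⟩, ?_⟩
      · refine dap_congr (f := db0 c') ?_ (dap_db0 m n c')
        intro i hi j hj
        simp [Nat.mod_eq_of_lt hi, Nat.mod_eq_of_lt hj]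
      · intro k l
        simp only [db0_ee, hc']
        rw [dif_pos ⟨k.2, l.2⟩]
    choose g hg using key
    have hginj : Function.Injective g := by
      intro c c' hcc
      funext k l
      have := hg c k l
      rw [hcc] at this
      rw [← this, hg c' k l]
    calc 2 ^ (a * b) = Nat.card (Fin a → Fin b → Fin 2) := by
          rw [Nat.mul_comm, pow_mul]
          simp [Nat.card_eq_fintype_card]
      _ ≤ Nat.card S := Nat.card_le_card_of_injective g hginj
  · refine ⟨db0, dap_db0 m n, fun c k l _ _ => db0_ee c k l,
      fun c k l _ _ => db0_oo c k l, fun c k l _ _ => db0_oe c k l,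
      fun c k l _ _ => db0_eo c k l, ?_⟩
    intro c c' h k l _ _
    have := congrFun (congrFun h (2*k)) (2*l)
    rwa [db0_ee, db0_ee] at this
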